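/- arXiv:2212.09546 — 7 statements merged into one kernel-verified Lean document; each statement's English description precedes it below -/
import Mathlib

section
/- Let U ⊆ ℝ² be open, and let A, B : ℝ → ℝ be twice differentiable functions such that cos(A(x)+B(y)) ≠ 0 for all (x,y) ∈ U. Then the function w(x,y) = arcsinh(tan(A(x)+B(y))) satisfies the elliptic sinh-Gordon equation Δw = 2 sinh(2w) at a point (x,y) ∈ U if and only if A''(x) + B''(y) = tan(A(x)+B(y))·(4 − (A'(x))² − (B'(y))²). -/
/-- First partial derivative (in the x-direction) of a function on ℝ². -/
noncomputable def pdx (f : ℝ × ℝ → ℝ) (p : ℝ × ℝ) : ℝ := fderiv ℝ f p (1, 0)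

/-- Second partial derivative (in the y-direction) of a function on ℝ². -/
noncomputable def pdy (f : ℝ × ℝ → ℝ) (p : ℝ × ℝ) : ℝ := fderiv ℝ f p (0, 1)

/-- Laplacian of a function on ℝ². -/
noncomputable def lap (f : ℝ × ℝ → ℝ) (p : ℝ × ℝ) : ℝ := pdx (pdx f) p + pdy (pdy f) p

lemma sqrt_one_add_tan_sq {t : ℝ} (h : Real.cos t ≠ 0) :
    Real.sqrt (1 + Real.tan t ^ 2) = |Real.cos t|⁻¹ := by
  have h1 : 1 + Real.tan t ^ 2 = (Real.cos t ^ 2)⁻¹ := by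
    rw [← Real.inv_one_add_tan_sq h, inv_inv]
  rw [h1, Real.sqrt_inv, Real.sqrt_sq_eq_abs]

lemma hasDerivAt_g {ε t : ℝ} (hε : ε = 1 ∨ ε = -1) (h : 0 < ε * Real.cos t) :
    HasDerivAt (fun u => Real.arsinh (Real.tan u)) (ε / Real.cos t) t := by
  have hc : Real.cos t ≠ 0 := by
    intro h0; rw [h0, mul_zero] at h; exact lt_irrefl 0 h
  have habs : |Real.cos t| = ε * Real.cos t := by
    rcases hε with rfl | rfl
    · rw [one_mul]; exact abs_of_pos (by linarith [h])
    · rw [abs_of_neg (by nlinarith : Real.cos t < 0)]; ring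
  have h1 := Real.hasDerivAt_tan hc
  have h2 := Real.hasDerivAt_arsinh (Real.tan t)
  have h3 := h2.comp t h1
  refine h3.congr_deriv ?_
  rw [sqrt_one_add_tan_sq hc, inv_inv, habs]
  have hε2 : ε * ε = 1 := by rcases hε with rfl | rfl <;> norm_num
  field_simp

lemma sinh_two_val {ε t : ℝ} (hε : ε = 1 ∨ ε = -1) (h : 0 < ε * Real.cos t) :
    Real.sinh (2 * Real.arsinh (Real.tan t)) = 2 * ε * Real.sin t / Real.cos t ^ 2 := by
  have hc : Real.cos t ≠ 0 := by
    intro h0; rw [h0, mul_zero] at h; exact lt_irrefl 0 h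
  have habs : |Real.cos t| = ε * Real.cos t := by
    rcases hε with rfl | rfl
    · rw [one_mul]; exact abs_of_pos (by linarith [h])
    · rw [abs_of_neg (by nlinarith : Real.cos t < 0)]; ring
  have hε2 : ε * ε = 1 := by rcases hε with rfl | rfl <;> norm_num
  rw [Real.sinh_two_mul, Real.sinh_arsinh, Real.cosh_arsinh, sqrt_one_add_tan_sq hc,
    Real.tan_eq_sin_div_cos, habs]
  field_simp
  have hεinv : ε⁻¹ = ε := by rcases hε with rfl | rfl <;> norm_num
  linear_combination Real.sin t * hεinv

lemma hasFDerivAt_sum (A B : ℝ → ℝ) (hA : Differentiable ℝ A) (hB : Differentiable ℝ B)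
    (p : ℝ × ℝ) :
    HasFDerivAt (fun q : ℝ × ℝ => A q.1 + B q.2)
      (deriv A p.1 • ContinuousLinearMap.fst ℝ ℝ ℝ +
        deriv B p.2 • ContinuousLinearMap.snd ℝ ℝ ℝ) p := by
  have h1 := ((hA p.1).hasDerivAt).hasFDerivAt.comp p hasFDerivAt_fst
  have h2 := ((hB p.2).hasDerivAt).hasFDerivAt.comp p hasFDerivAt_snd
  refine (h1.add h2).congr_fderiv ?_
  refine ContinuousLinearMap.ext fun v => ?_
  simp [mul_comm]

theorem stmt_2 (U : Set (ℝ × ℝ)) (hU : IsOpen U)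
    (A B : ℝ → ℝ)
    (hA : Differentiable ℝ A) (hA' : Differentiable ℝ (deriv A))
    (hB : Differentiable ℝ B) (hB' : Differentiable ℝ (deriv B))
    (hcos : ∀ p ∈ U, Real.cos (A p.1 + B p.2) ≠ 0)
    (w : ℝ × ℝ → ℝ) (hw : ∀ p : ℝ × ℝ, w p = Real.arsinh (Real.tan (A p.1 + B p.2)))
    (x y : ℝ) (hxy : (x, y) ∈ U) :
    lap w (x, y) = 2 * Real.sinh (2 * w (x, y)) ↔
      deriv (deriv A) x + deriv (deriv B) y =
        Real.tan (A x + B y) * (4 - (deriv A x) ^ 2 - (deriv B y) ^ 2) := by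
  have hw' : w = fun p : ℝ × ℝ => Real.arsinh (Real.tan (A p.1 + B p.2)) := funext hw
  subst hw'
  set c : ℝ := Real.cos (A x + B y) with hc_def
  have hc : c ≠ 0 := hcos (x, y) hxy
  set ε : ℝ := if 0 < c then 1 else -1 with hε_def
  have hεpm : ε = 1 ∨ ε = -1 := by
    by_cases h : 0 < c <;> simp [hε_def, h]
  have hε2 : ε * ε = 1 := by rcases hεpm with h | h <;> rw [h] <;> norm_num
  have hεne : ε ≠ 0 := by rcases hεpm with h | h <;> rw [h] <;> norm_num
  -- the open set V
  set V : Set (ℝ × ℝ) := {p | 0 < ε * Real.cos (A p.1 + B p.2)} with hV_def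
  have hVopen : IsOpen V := by
    have hcont : Continuous fun p : ℝ × ℝ => ε * Real.cos (A p.1 + B p.2) :=
      continuous_const.mul (Real.continuous_cos.comp
        ((hA.continuous.comp continuous_fst).add (hB.continuous.comp continuous_snd)))
    exact isOpen_Ioi.preimage hcont
  have hxyV : (x, y) ∈ V := by
    show 0 < ε * c
    by_cases h : 0 < c
    · simp only [hε_def, if_pos h]; linarith
    · simp only [hε_def, if_neg h]
      have : c < 0 := lt_of_le_of_ne (not_lt.mp h) hc
      nlinarith
  have hVmem : ∀ p ∈ V, 0 < ε * Real.cos (A p.1 + B p.2) := fun p hp => hp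
  have hVcos : ∀ p ∈ V, Real.cos (A p.1 + B p.2) ≠ 0 := by
    intro p hp h0
    have := hVmem p hp
    rw [h0, mul_zero] at this; exact lt_irrefl 0 this
  -- derivative of w on V
  have hwV : ∀ p ∈ V, HasFDerivAt (fun q : ℝ × ℝ => Real.arsinh (Real.tan (A q.1 + B q.2)))
      ((ε / Real.cos (A p.1 + B p.2)) •
        (deriv A p.1 • ContinuousLinearMap.fst ℝ ℝ ℝ +
         deriv B p.2 • ContinuousLinearMap.snd ℝ ℝ ℝ)) p := by
    intro p hp
    exact (hasDerivAt_g hεpm (hVmem p hp)).comp_hasFDerivAt (f := fun q : ℝ × ℝ => A q.1 + B q.2) p (hasFDerivAt_sum A B hA hB p)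
  -- first partials on V
  have hpdx : ∀ p ∈ V, pdx (fun q : ℝ × ℝ => Real.arsinh (Real.tan (A q.1 + B q.2))) p =
      ε * (Real.cos (A p.1 + B p.2))⁻¹ * deriv A p.1 := by
    intro p hp
    rw [pdx, (hwV p hp).fderiv]
    simp [div_eq_mul_inv]

  have hpdy : ∀ p ∈ V, pdy (fun q : ℝ × ℝ => Real.arsinh (Real.tan (A q.1 + B q.2))) p =
      ε * (Real.cos (A p.1 + B p.2))⁻¹ * deriv B p.2 := by
    intro p hp
    rw [pdy, (hwV p hp).fderiv]
    simp [div_eq_mul_inv]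

  -- the inverse-cos function composed with s
  have hinv : ∀ p ∈ V, HasFDerivAt (fun q : ℝ × ℝ => (Real.cos (A q.1 + B q.2))⁻¹)
      ((Real.sin (A p.1 + B p.2) / Real.cos (A p.1 + B p.2) ^ 2) •
        (deriv A p.1 • ContinuousLinearMap.fst ℝ ℝ ℝ +
         deriv B p.2 • ContinuousLinearMap.snd ℝ ℝ ℝ)) p := by
    intro p hp
    have h1 : HasDerivAt (fun t => (Real.cos t)⁻¹)
        (Real.sin (A p.1 + B p.2) / Real.cos (A p.1 + B p.2) ^ 2) (A p.1 + B p.2) := by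
      have := (Real.hasDerivAt_cos (A p.1 + B p.2)).inv (hVcos p hp)
      refine this.congr_deriv ?_
      ring
    exact h1.comp_hasFDerivAt (f := fun q : ℝ × ℝ => A q.1 + B q.2) p (hasFDerivAt_sum A B hA hB p)
  -- second x-partial at (x,y)
  have hFx : HasFDerivAt
      (fun p : ℝ × ℝ => ε * (Real.cos (A p.1 + B p.2))⁻¹ * deriv A p.1)
      (((ε * (Real.cos (A x + B y))⁻¹) •
          (deriv (deriv A) x • ContinuousLinearMap.fst ℝ ℝ ℝ)) +
        (deriv A x • ((ε * (Real.sin (A x + B y) / Real.cos (A x + B y) ^ 2)) •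
          (deriv A x • ContinuousLinearMap.fst ℝ ℝ ℝ +
           deriv B y • ContinuousLinearMap.snd ℝ ℝ ℝ)))) (x, y) := by
    have hu : HasFDerivAt (fun p : ℝ × ℝ => ε * (Real.cos (A p.1 + B p.2))⁻¹)
        ((ε * (Real.sin (A x + B y) / Real.cos (A x + B y) ^ 2)) •
          (deriv A x • ContinuousLinearMap.fst ℝ ℝ ℝ +
           deriv B y • ContinuousLinearMap.snd ℝ ℝ ℝ)) (x, y) := by
      have := (hinv (x, y) hxyV).const_smul ε
      refine this.congr_fderiv ?_
      simp only [smul_smul]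

    have hv : HasFDerivAt (fun p : ℝ × ℝ => deriv A p.1)
        ((deriv (deriv A) x) • ContinuousLinearMap.fst ℝ ℝ ℝ) (x, y) := by
      have h1 := ((hA' x).hasDerivAt).hasFDerivAt.comp (x, y) (hasFDerivAt_fst (𝕜 := ℝ) (p := (x, y)))
      refine h1.congr_fderiv ?_
      refine ContinuousLinearMap.ext fun v => ?_
      simp [mul_comm]
    have := hu.mul hv
    exact this

  -- second y-partial at (x,y)
  have hFy : HasFDerivAt
      (fun p : ℝ × ℝ => ε * (Real.cos (A p.1 + B p.2))⁻¹ * deriv B p.2)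
      (((ε * (Real.cos (A x + B y))⁻¹) •
          (deriv (deriv B) y • ContinuousLinearMap.snd ℝ ℝ ℝ)) +
        (deriv B y • ((ε * (Real.sin (A x + B y) / Real.cos (A x + B y) ^ 2)) •
          (deriv A x • ContinuousLinearMap.fst ℝ ℝ ℝ +
           deriv B y • ContinuousLinearMap.snd ℝ ℝ ℝ)))) (x, y) := by
    have hu : HasFDerivAt (fun p : ℝ × ℝ => ε * (Real.cos (A p.1 + B p.2))⁻¹)
        ((ε * (Real.sin (A x + B y) / Real.cos (A x + B y) ^ 2)) •
          (deriv A x • ContinuousLinearMap.fst ℝ ℝ ℝ +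
           deriv B y • ContinuousLinearMap.snd ℝ ℝ ℝ)) (x, y) := by
      have := (hinv (x, y) hxyV).const_smul ε
      refine this.congr_fderiv ?_
      simp only [smul_smul]
    have hv : HasFDerivAt (fun p : ℝ × ℝ => deriv B p.2)
        ((deriv (deriv B) y) • ContinuousLinearMap.snd ℝ ℝ ℝ) (x, y) := by
      have h1 := ((hB' y).hasDerivAt).hasFDerivAt.comp (x, y) (hasFDerivAt_snd (𝕜 := ℝ) (p := (x, y)))
      refine h1.congr_fderiv ?_
      refine ContinuousLinearMap.ext fun v => ?_
      simp [mul_comm]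
    have := hu.mul hv
    exact this
  -- second partial values
  have h2x : pdx (pdx (fun q : ℝ × ℝ => Real.arsinh (Real.tan (A q.1 + B q.2)))) (x, y) =
      ε * c⁻¹ * deriv (deriv A) x +
        deriv A x * (ε * (Real.sin (A x + B y) / c ^ 2)) * deriv A x := by
    have heq : pdx (fun q : ℝ × ℝ => Real.arsinh (Real.tan (A q.1 + B q.2))) =ᶠ[nhds (x, y)]
        fun p : ℝ × ℝ => ε * (Real.cos (A p.1 + B p.2))⁻¹ * deriv A p.1 :=
      Filter.eventuallyEq_of_mem (hVopen.mem_nhds hxyV) hpdx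
    rw [pdx, heq.fderiv_eq, hFx.fderiv]
    simp
    ring
  have h2y : pdy (pdy (fun q : ℝ × ℝ => Real.arsinh (Real.tan (A q.1 + B q.2)))) (x, y) =
      ε * c⁻¹ * deriv (deriv B) y +
        deriv B y * (ε * (Real.sin (A x + B y) / c ^ 2)) * deriv B y := by
    have heq : pdy (fun q : ℝ × ℝ => Real.arsinh (Real.tan (A q.1 + B q.2))) =ᶠ[nhds (x, y)]
        fun p : ℝ × ℝ => ε * (Real.cos (A p.1 + B p.2))⁻¹ * deriv B p.2 :=
      Filter.eventuallyEq_of_mem (hVopen.mem_nhds hxyV) hpdy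
    rw [pdy, heq.fderiv_eq, hFy.fderiv]
    simp
    ring
  -- sinh value
  have hsinh : Real.sinh (2 * Real.arsinh (Real.tan (A x + B y))) =
      2 * ε * Real.sin (A x + B y) / c ^ 2 := sinh_two_val hεpm hxyV
  rw [lap, h2x, h2y]
  rw [show (fun p : ℝ × ℝ => Real.arsinh (Real.tan (A p.1 + B p.2))) (x, y)
      = Real.arsinh (Real.tan (A x + B y)) from rfl, hsinh, Real.tan_eq_sin_div_cos]
  rw [show Real.cos (A x + B y) = c from rfl]
  have hc2 : c ^ 2 ≠ 0 := pow_ne_zero _ hc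
  have hcc : c * c⁻¹ = 1 := mul_inv_cancel₀ hc
  set a1 := deriv A x
  set b1 := deriv B y
  set a2 := deriv (deriv A) x
  set b2 := deriv (deriv B) y
  set sn := Real.sin (A x + B y)
  rcases hεpm with h | h <;> rw [h]
  · constructor <;> intro hh
    · linear_combination c * hh -
        ((a2 + b2) + sn * c⁻¹ * (a1 ^ 2 + b1 ^ 2 - 4)) * hcc
    · linear_combination c⁻¹ * hh
  · constructor <;> intro hh
    · linear_combination (-c) * hh -
        ((a2 + b2) + sn * c⁻¹ * (a1 ^ 2 + b1 ^ 2 - 4)) * hcc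
    · linear_combination (-(c⁻¹)) * hh
end

section
/- Let I be a real interval containing 0, let g : I → ℝ be continuous, and let f : I → ℝ be differentiable with f'(y) = −2 g(y) cosh(f(y)) for all y ∈ I and f(0) = 0. Then for every y ∈ I one has |∫₀^y g(s) ds| < π/4 and tanh(f(y)/2) = −tan(∫₀^y g(s) ds). -/
open Real Set intervalIntegral

theorem stmt_8 (I : Set ℝ) (hI : I.OrdConnected) (hI0 : (0 : ℝ) ∈ I)
    (g : ℝ → ℝ) (hg : ContinuousOn g I)
    (f : ℝ → ℝ)
    (hf : ∀ y ∈ I, HasDerivWithinAt f (-2 * g y * Real.cosh (f y)) I y)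
    (hf0 : f 0 = 0) :
    ∀ y ∈ I, |∫ s in (0 : ℝ)..y, g s| < Real.pi / 4 ∧
      Real.tanh (f y / 2) = -Real.tan (∫ s in (0 : ℝ)..y, g s) := by
  set h : ℝ → ℝ := fun y => -Real.arctan (Real.sinh (f y / 2) / Real.cosh (f y / 2)) with hh
  have coshpos : ∀ x : ℝ, (0:ℝ) < Real.cosh x := Real.cosh_pos
  have hderiv : ∀ y ∈ I, HasDerivWithinAt h (g y) I y := by
    intro y hy
    have hu : HasDerivWithinAt (fun y => f y / 2) (-2 * g y * Real.cosh (f y) / 2) I y :=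
      (hf y hy).div_const 2
    have hs := hu.sinh
    have hc := hu.cosh
    have hq := hs.div hc (ne_of_gt (coshpos _))
    have ha := hq.arctan.neg
    convert ha using 1
    case e'_4 => rfl
    case e'_5 => rfl
    case e'_8 => rfl
    have h1 : Real.cosh (f y) = Real.cosh (f y / 2) ^ 2 + Real.sinh (f y / 2) ^ 2 := by
      have h2 : Real.cosh (f y) = Real.cosh (2 * (f y / 2)) := by
        congr 1
        ring
      rw [h2, Real.cosh_two_mul]
    rw [h1]
    have hcne : Real.cosh (f y / 2) ≠ 0 := ne_of_gt (coshpos _)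
    have hden : Real.cosh (f y / 2) ^ 2 + Real.sinh (f y / 2) ^ 2 > 0 := by positivity
    simp only [Pi.div_apply]
    field_simp
    linear_combination (-g y) *
      Real.cosh_sq_sub_sinh_sq (f y / 2)
  intro y hy
  have hsub : uIcc 0 y ⊆ I := hI.uIcc_subset hI0 hy
  have hint : IntervalIntegrable g MeasureTheory.volume 0 y :=
    (hg.mono hsub).intervalIntegrable
  have hcont : ContinuousOn h (uIcc 0 y) :=
    (fun x hx => ((hderiv x (hsub hx)).differentiableWithinAt.continuousWithinAt).mono hsub)
  have hIoo : Ioo (min 0 y) (max 0 y) ⊆ I := fun x hx => hsub ⟨le_of_lt hx.1, le_of_lt hx.2⟩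
  have key : ∫ s in (0:ℝ)..y, g s = h y - h 0 := by
    apply integral_eq_sub_of_hasDeriv_right hcont _ hint
    intro x hx
    have hxI : x ∈ I := hIoo hx
    refine (hderiv x hxI).mono_of_mem_nhdsWithin ?_
    exact Filter.mem_of_superset (Ioo_mem_nhdsGT_of_mem ⟨le_refl x, hx.2⟩)
      (fun z hz => hIoo ⟨lt_trans hx.1 hz.1, hz.2⟩)
  have h0 : h 0 = 0 := by simp [hh, hf0]
  rw [h0, sub_zero] at key
  set t : ℝ := Real.sinh (f y / 2) / Real.cosh (f y / 2) with ht
  have htanh : Real.tanh (f y / 2) = t := Real.tanh_eq_sinh_div_cosh _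
  have habs : |t| < 1 := by
    rw [ht, abs_div, abs_of_pos (coshpos (f y / 2)), div_lt_one (coshpos _)]
    have := Real.cosh_sq_sub_sinh_sq (f y / 2)
    nlinarith [abs_nonneg (Real.sinh (f y / 2)), sq_abs (Real.sinh (f y / 2)),
      coshpos (f y / 2)]
  have hlt : |∫ s in (0:ℝ)..y, g s| < Real.pi / 4 := by
    rw [key, hh]
    simp only [abs_neg]
    rw [abs_lt] at habs ⊢
    constructor
    · have := Real.arctan_strictMono habs.1
      rwa [show Real.arctan (-1) = -(Real.pi/4) by
        rw [Real.arctan_neg, Real.arctan_one]] at this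
    · have := Real.arctan_strictMono habs.2
      rwa [Real.arctan_one] at this
  refine ⟨hlt, ?_⟩
  rw [key, hh, htanh]
  simp [Real.tan_arctan, ht]
end

section
/- Let I be a real interval containing 0, let g : I → ℝ be continuous, and let f : I → ℝ be differentiable with f'(x) = −2 g(x) sinh(f(x)) for all x ∈ I. Then for every x ∈ I one has tanh(f(x)/2) = tanh(f(0)/2) · exp(−2 ∫₀^x g(t) dt). -/
open Real Set intervalIntegral

theorem stmt_9 (I : Set ℝ) (hI : I.OrdConnected) (hI0 : (0 : ℝ) ∈ I)
    (g : ℝ → ℝ) (hg : ContinuousOn g I)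
    (f : ℝ → ℝ)
    (hf : ∀ x ∈ I, HasDerivWithinAt f (-2 * g x * Real.sinh (f x)) I x) :
    ∀ x ∈ I, Real.tanh (f x / 2) =
      Real.tanh (f 0 / 2) * Real.exp (-2 * ∫ t in (0 : ℝ)..x, g t) := by
  intro x hx
  set a := min 0 x with ha
  set b := max 0 x with hb
  have hab : a ≤ b := min_le_max
  set K := Set.Icc a b with hK
  have hKI : K ⊆ I := by
    have := hI.uIcc_subset hI0 hx
    simpa [Set.uIcc, hK, ha, hb] using this
  have h0K : (0:ℝ) ∈ K := ⟨min_le_left _ _, le_max_left _ _⟩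
  have hxK : x ∈ K := ⟨min_le_right _ _, le_max_right _ _⟩
  set g' : ℝ → ℝ := fun t => g ((Set.projIcc a b hab t : Set.Icc a b) : ℝ) with hg'
  have hg'c : Continuous g' :=
    (hg.mono hKI).comp_continuous (continuous_subtype_val.comp continuous_projIcc)
      (fun t => (Set.projIcc a b hab t).2)
  have hg'eq : ∀ t ∈ K, g' t = g t := by
    intro t ht
    simp [hg', Set.projIcc_of_mem hab ht]
  set G : ℝ → ℝ := fun u => ∫ t in (0:ℝ)..u, g' t with hG
  have hGd : ∀ u : ℝ, HasDerivAt G (g' u) u := fun u =>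
    (hg'c.integral_hasStrictDerivAt 0 u).hasDerivAt
  set h : ℝ → ℝ := fun t =>
    Real.sinh (f t / 2) / Real.cosh (f t / 2) * Real.exp (2 * G t) with hh
  have hderiv : ∀ t ∈ K, HasDerivWithinAt h 0 K t := by
    intro t ht
    have hft : HasDerivWithinAt f (-2 * g t * Real.sinh (f t)) K t :=
      (hf t (hKI ht)).mono hKI
    have hft2 : HasDerivWithinAt (fun s => f s / 2) (-2 * g t * Real.sinh (f t) / 2) K t :=
      hft.div_const 2
    have hs : HasDerivWithinAt (fun s => Real.sinh (f s / 2))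
        (Real.cosh (f t / 2) * (-2 * g t * Real.sinh (f t) / 2)) K t :=
      (Real.hasDerivAt_sinh _).comp_hasDerivWithinAt t hft2
    have hc : HasDerivWithinAt (fun s => Real.cosh (f s / 2))
        (Real.sinh (f t / 2) * (-2 * g t * Real.sinh (f t) / 2)) K t :=
      (Real.hasDerivAt_cosh _).comp_hasDerivWithinAt t hft2
    have hcne : Real.cosh (f t / 2) ≠ 0 := (Real.cosh_pos (x := f t / 2)).ne'
    have hq : HasDerivWithinAt (fun s => Real.sinh (f s / 2) / Real.cosh (f s / 2))
        ((Real.cosh (f t / 2) * (-2 * g t * Real.sinh (f t) / 2) * Real.cosh (f t / 2) -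
          Real.sinh (f t / 2) * (Real.sinh (f t / 2) * (-2 * g t * Real.sinh (f t) / 2))) /
          Real.cosh (f t / 2) ^ 2) K t := hs.div hc hcne
    have hE : HasDerivWithinAt (fun s => Real.exp (2 * G s))
        (Real.exp (2 * G t) * (2 * g' t)) K t :=
      ((Real.hasDerivAt_exp _).comp t ((hGd t).const_mul 2)).hasDerivWithinAt
    have hsf : Real.sinh (f t) = 2 * Real.sinh (f t / 2) * Real.cosh (f t / 2) := by
      have h2 : 2 * (f t / 2) = f t := by ring
      conv_lhs => rw [← h2]
      rw [Real.sinh_two_mul]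
    have hid : Real.cosh (f t / 2) ^ 2 - Real.sinh (f t / 2) ^ 2 = 1 :=
      Real.cosh_sq_sub_sinh_sq (f t / 2)
    have := hq.mul hE
    convert this using 1
    case e'_4 => rfl
    case e'_5 => rfl
    case e'_8 => rfl
    rw [hg'eq t ht, hsf]
    field_simp
    linear_combination (g t * Real.sinh (f t / 2) * Real.exp (2 * G t) * 2) * hid
  have hconst : h x = h 0 := by
    have hcv : Convex ℝ K := convex_Icc a b
    have := hcv.norm_image_sub_le_of_norm_hasDerivWithin_le
      (f' := fun _ => (0:ℝ)) (C := 0) hderiv (fun y hy => by simp) h0K hxK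
    exact sub_eq_zero.mp (norm_le_zero_iff.mp (by simpa using this))
  have hInt : (∫ t in (0:ℝ)..x, g' t) = ∫ t in (0:ℝ)..x, g t := by
    apply intervalIntegral.integral_congr
    intro t ht
    apply hg'eq
    simpa [Set.uIcc, hK, ha, hb] using ht
  have hG0 : G 0 = 0 := intervalIntegral.integral_same
  have hGx : G x = ∫ t in (0:ℝ)..x, g t := hInt
  rw [hh] at hconst
  simp only [hG0, mul_zero, Real.exp_zero, mul_one, hGx] at hconst
  rw [Real.tanh_eq_sinh_div_cosh, Real.tanh_eq_sinh_div_cosh, ← hconst]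
  rw [mul_assoc, ← Real.exp_add]
  ring_nf
  simp
end

section
/- Let F, G : ℝ → ℝ be differentiable functions with F'(0) = 0, define θ(x,y) = 2 arctan(F(x)G(y)), and let w : ℝ² → ℝ be a differentiable function with w(0,0) = 0 satisfying the Bäcklund equation ∂w/∂y + ∂θ/∂x = −2 cosh(w) cos(θ) on ℝ². Then for every y ∈ ℝ, tanh(w(0,y)/2) = −tan(∫₀^y cos θ(0,s) ds), and |∫₀^y cos θ(0,s) ds| < π/4. -/
lemma abs_tanh_lt_one (x : ℝ) : |Real.tanh x| < 1 := by
  rw [Real.tanh_eq_sinh_div_cosh, abs_div, abs_of_pos (Real.cosh_pos x),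
    div_lt_one (Real.cosh_pos x), abs_lt]
  constructor
  · nlinarith [Real.sinh_add_cosh x, Real.exp_pos x]
  · nlinarith [Real.cosh_sub_sinh x, Real.exp_pos (-x)]

theorem stmt_10 (F G : ℝ → ℝ) (hF : Differentiable ℝ F) (hG : Differentiable ℝ G)
    (hF'0 : deriv F 0 = 0)
    (θ : ℝ × ℝ → ℝ) (hθ : ∀ p : ℝ × ℝ, θ p = 2 * Real.arctan (F p.1 * G p.2))
    (w : ℝ × ℝ → ℝ) (hw : Differentiable ℝ w) (hw0 : w (0, 0) = 0)
    (hB2 : ∀ p : ℝ × ℝ, pdy w p + pdx θ p = -2 * Real.cosh (w p) * Real.cos (θ p)) :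
    ∀ y : ℝ,
      Real.tanh (w (0, y) / 2) = -Real.tan (∫ s in (0 : ℝ)..y, Real.cos (θ (0, s))) ∧
      |∫ s in (0 : ℝ)..y, Real.cos (θ (0, s))| < Real.pi / 4 := by
  have hθfun : θ = fun p => 2 * Real.arctan (F p.1 * G p.2) := funext hθ
  have hθdiff : Differentiable ℝ θ := by
    rw [hθfun]
    exact ((Real.differentiable_arctan.comp
      ((hF.comp differentiable_fst).mul (hG.comp differentiable_snd)))).const_mul 2
  -- pdx θ (0, y) = 0
  have hpdx : ∀ y : ℝ, pdx θ (0, y) = 0 := by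
    intro y
    have h1 : HasDerivAt (fun x : ℝ => (x, y)) ((1 : ℝ), (0 : ℝ)) 0 :=
      (hasDerivAt_id 0).prodMk (hasDerivAt_const 0 y)
    have h2 : HasDerivAt (fun x : ℝ => θ (x, y)) (pdx θ (0, y)) 0 :=
      (hθdiff (0, y)).hasFDerivAt.comp_hasDerivAt 0 h1
    have h3 : HasDerivAt (fun x : ℝ => θ (x, y)) 0 0 := by
      have hFd : HasDerivAt (fun x => F x * G y) (deriv F 0 * G y) 0 :=
        ((hF 0).hasDerivAt).mul_const (G y)
      have := ((Real.hasDerivAt_arctan (F 0 * G y)).comp 0 hFd).const_mul 2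
      simp only [hθfun]
      exact this.congr_deriv (by rw [hF'0]; ring)
    exact h2.unique h3
  -- derivative of y ↦ w (0, y)
  have hu : ∀ y : ℝ, HasDerivAt (fun y : ℝ => w (0, y))
      (-2 * Real.cosh (w (0, y)) * Real.cos (θ (0, y))) y := by
    intro y
    have h1 : HasDerivAt (fun y : ℝ => ((0 : ℝ), y)) ((0 : ℝ), (1 : ℝ)) y :=
      (hasDerivAt_const y (0 : ℝ)).prodMk (hasDerivAt_id y)
    have h2 : HasDerivAt (fun y : ℝ => w (0, y)) (pdy w (0, y)) y :=
      (hw (0, y)).hasFDerivAt.comp_hasDerivAt y h1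
    have h3 : pdy w (0, y) = -2 * Real.cosh (w (0, y)) * Real.cos (θ (0, y)) := by
      have := hB2 (0, y)
      rw [hpdx y] at this
      linarith
    rwa [h3] at h2
  set φ : ℝ → ℝ := fun y => Real.arctan (-Real.tanh (w (0, y) / 2)) with hφ
  have hφderiv : ∀ y : ℝ, HasDerivAt φ (Real.cos (θ (0, y))) y := by
    intro y
    set c := Real.cosh (w (0, y) / 2) with hc
    set s := Real.sinh (w (0, y) / 2) with hs
    have hcpos : (0 : ℝ) < c := Real.cosh_pos _
    have hu2 : HasDerivAt (fun y : ℝ => w (0, y) / 2)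
        (-2 * Real.cosh (w (0, y)) * Real.cos (θ (0, y)) / 2) y := (hu y).div_const 2
    have hsinh : HasDerivAt (fun y : ℝ => Real.sinh (w (0, y) / 2))
        (c * (-2 * Real.cosh (w (0, y)) * Real.cos (θ (0, y)) / 2)) y :=
      (Real.hasDerivAt_sinh _).comp y hu2
    have hcosh : HasDerivAt (fun y : ℝ => Real.cosh (w (0, y) / 2))
        (s * (-2 * Real.cosh (w (0, y)) * Real.cos (θ (0, y)) / 2)) y :=
      (Real.hasDerivAt_cosh _).comp y hu2
    have htanh : HasDerivAt (fun y : ℝ => Real.tanh (w (0, y) / 2))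
        ((c * (-2 * Real.cosh (w (0, y)) * Real.cos (θ (0, y)) / 2) * c -
          s * (s * (-2 * Real.cosh (w (0, y)) * Real.cos (θ (0, y)) / 2))) / c ^ 2) y := by
      have := hsinh.div hcosh hcpos.ne'
      rw [show (fun y : ℝ => Real.tanh (w (0, y) / 2)) = fun y => Real.sinh (w (0, y) / 2) / Real.cosh (w (0, y) / 2) from funext fun _ => Real.tanh_eq_sinh_div_cosh _]; exact this
    have harc := (Real.hasDerivAt_arctan (-Real.tanh (w (0, y) / 2))).comp y htanh.neg
    refine harc.congr_deriv (Eq.symm ?_)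
    have hw2 : Real.cosh (w (0, y)) = c ^ 2 + s ^ 2 := by
      have : w (0, y) = w (0, y) / 2 + w (0, y) / 2 := by ring
      rw [this, Real.cosh_add]; ring
    have hcs : c ^ 2 - s ^ 2 = 1 := Real.cosh_sq_sub_sinh_sq _
    rw [Real.tanh_eq_sinh_div_cosh, ← hs, ← hc, hw2]
    field_simp
    linear_combination (-Real.cos (θ (0, y))) * hcs
  have hφ0 : φ 0 = 0 := by
    show Real.arctan (-Real.tanh (w (0, 0) / 2)) = 0
    rw [hw0]
    norm_num [Real.tanh_eq_sinh_div_cosh]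
  have hcont : Continuous fun s : ℝ => Real.cos (θ (0, s)) :=
    Real.continuous_cos.comp (hθdiff.continuous.comp (by fun_prop))
  intro y
  have hint : (∫ s in (0 : ℝ)..y, Real.cos (θ (0, s))) = φ y := by
    rw [intervalIntegral.integral_eq_sub_of_hasDerivAt
      (fun s _ => hφderiv s) (hcont.intervalIntegrable 0 y), hφ0, sub_zero]
  have habs : |(-Real.tanh (w (0, y) / 2))| < 1 := by
    rw [abs_neg]; exact abs_tanh_lt_one _
  constructor
  · rw [hint, hφ]
    simp [Real.tan_arctan]
  · rw [hint, hφ]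
    rw [abs_lt]
    constructor
    · have : -(Real.pi / 4) = Real.arctan (-1) := by
        rw [Real.arctan_neg, Real.arctan_one]
      rw [this]
      exact Real.arctan_strictMono (by linarith [abs_lt.mp habs |>.1])
    · rw [← Real.arctan_one]
      exact Real.arctan_strictMono (abs_lt.mp habs |>.2)
end

section
/- Let C, D : ℝ → ℝ be differentiable functions with D'(0) = 0, define θ(x,y) = arcsin(tanh(C(x)+D(y))), and let w : ℝ² → ℝ be a differentiable function satisfying the Bäcklund equation ∂w/∂x − ∂θ/∂y = −2 sinh(w) sin(θ) on ℝ². Then for every x ∈ ℝ, tanh(w(x,0)/2) = tanh(w(0,0)/2) · exp(−2 ∫₀^x sin θ(t,0) dt). -/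
lemma tanh_eq_fun : Real.tanh = fun y => Real.sinh y / Real.cosh y :=
  funext fun y => Real.tanh_eq_sinh_div_cosh y

lemma continuous_tanh' : Continuous Real.tanh := by
  rw [tanh_eq_fun]
  exact Real.continuous_sinh.div Real.continuous_cosh fun y => (Real.cosh_pos y).ne'

lemma hasDerivAt_tanh' (x : ℝ) : HasDerivAt Real.tanh (1 / Real.cosh x ^ 2) x := by
  have h := (Real.hasDerivAt_sinh x).div (Real.hasDerivAt_cosh x) (Real.cosh_pos x).ne'
  rw [tanh_eq_fun]
  refine h.congr_deriv ?_
  rw [show Real.cosh x * Real.cosh x - Real.sinh x * Real.sinh x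
      = Real.cosh x ^ 2 - Real.sinh x ^ 2 by ring, Real.cosh_sq_sub_sinh_sq]

lemma hasDerivAt_arcsin_tanh (s : ℝ) :
    HasDerivAt (fun r => Real.arcsin (Real.tanh r))
      ((1 / Real.sqrt (1 - Real.tanh s ^ 2)) * (1 / Real.cosh s ^ 2)) s := by
  have h1 : Real.tanh s ≠ -1 := by
    have := abs_tanh_lt_one s; rw [abs_lt] at this; linarith [this.1]
  have h2 : Real.tanh s ≠ 1 := by
    have := abs_tanh_lt_one s; rw [abs_lt] at this; linarith [this.2]
  exact (Real.hasDerivAt_arcsin h1 h2).comp s (hasDerivAt_tanh' s)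

theorem stmt_11 (C D : ℝ → ℝ) (hC : Differentiable ℝ C) (hD : Differentiable ℝ D)
    (hD'0 : deriv D 0 = 0)
    (θ : ℝ × ℝ → ℝ)
    (hθ : ∀ p : ℝ × ℝ, θ p = Real.arcsin (Real.tanh (C p.1 + D p.2)))
    (w : ℝ × ℝ → ℝ) (hw : Differentiable ℝ w)
    (hB1 : ∀ p : ℝ × ℝ, pdx w p - pdy θ p = -2 * Real.sinh (w p) * Real.sin (θ p)) :
    ∀ x : ℝ, Real.tanh (w (x, 0) / 2) =
      Real.tanh (w (0, 0) / 2) * Real.exp (-2 * ∫ t in (0 : ℝ)..x, Real.sin (θ (t, 0))) := by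
  -- θ equals the formula as functions
  have hθfun : θ = fun p : ℝ × ℝ => Real.arcsin (Real.tanh (C p.1 + D p.2)) :=
    funext hθ
  -- pdy θ (x,0) = 0
  have hpdy : ∀ x : ℝ, pdy θ (x, 0) = 0 := by
    intro x
    have hu : HasFDerivAt (fun p : ℝ × ℝ => C p.1 + D p.2)
        ((deriv C x) • (ContinuousLinearMap.fst ℝ ℝ ℝ)
          + (deriv D 0) • (ContinuousLinearMap.snd ℝ ℝ ℝ)) (x, 0) := by
      have h1 : HasFDerivAt (fun p : ℝ × ℝ => C p.1)
          ((deriv C x) • (ContinuousLinearMap.fst ℝ ℝ ℝ)) (x, 0) := by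
        have := ((hC x).hasDerivAt).comp_hasFDerivAt (x, 0)
          (hasFDerivAt_fst (𝕜 := ℝ) (p := ((x : ℝ), (0 : ℝ))))
        exact this
      have h2 : HasFDerivAt (fun p : ℝ × ℝ => D p.2)
          ((deriv D 0) • (ContinuousLinearMap.snd ℝ ℝ ℝ)) (x, 0) := by
        have := ((hD 0).hasDerivAt).comp_hasFDerivAt (x, 0)
          (hasFDerivAt_snd (𝕜 := ℝ) (p := ((x : ℝ), (0 : ℝ))))
        exact this
      exact h1.add h2
    have hθd : HasFDerivAt θ
        (((1 / Real.sqrt (1 - Real.tanh (C x + D 0) ^ 2)) * (1 / Real.cosh (C x + D 0) ^ 2)) •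
          ((deriv C x) • (ContinuousLinearMap.fst ℝ ℝ ℝ)
            + (deriv D 0) • (ContinuousLinearMap.snd ℝ ℝ ℝ))) (x, 0) := by
      rw [hθfun]
      exact (hasDerivAt_arcsin_tanh (C x + D 0)).comp_hasFDerivAt (x, 0) hu
    rw [pdy, hθd.fderiv]
    simp [hD'0]
  -- derivative of x ↦ w (x,0)
  have hW : ∀ x : ℝ, HasDerivAt (fun x => w (x, 0))
      (-2 * Real.sinh (w (x, 0)) * Real.sin (θ (x, 0))) x := by
    intro x
    have hcurve : HasDerivAt (fun x : ℝ => ((x : ℝ), (0 : ℝ))) (1, 0) x :=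
      (hasDerivAt_id x).prodMk (hasDerivAt_const x 0)
    have h := (hw (x, 0)).hasFDerivAt.comp_hasDerivAt x hcurve
    have hval : fderiv ℝ w (x, 0) (1, 0) = -2 * Real.sinh (w (x, 0)) * Real.sin (θ (x, 0)) := by
      have := hB1 (x, 0)
      rw [hpdy x] at this
      simpa [pdx] using this
    rw [hval] at h
    exact h
  -- continuity of integrand
  have hcont : Continuous (fun t : ℝ => Real.sin (θ (t, 0))) := by
    rw [hθfun]
    exact Real.continuous_sin.comp (Real.continuous_arcsin.comp
      (continuous_tanh'.comp (hC.continuous.add (continuous_const (y := D 0)))))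
  set I : ℝ → ℝ := fun x => ∫ t in (0 : ℝ)..x, Real.sin (θ (t, 0)) with hI
  have hIderiv : ∀ x : ℝ, HasDerivAt I (Real.sin (θ (x, 0))) x := fun x =>
    (hcont.integral_hasStrictDerivAt 0 x).hasDerivAt
  -- g and h
  set g : ℝ → ℝ := fun x => Real.tanh (w (x, 0) / 2) with hg
  have hgderiv : ∀ x : ℝ, HasDerivAt g (-2 * Real.sin (θ (x, 0)) * g x) x := by
    intro x
    have h1 : HasDerivAt (fun x => w (x, 0) / 2)
        (-2 * Real.sinh (w (x, 0)) * Real.sin (θ (x, 0)) / 2) x := (hW x).div_const 2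
    have h2 := (hasDerivAt_tanh' (w (x, 0) / 2)).comp x h1
    have key : (1 / Real.cosh (w (x, 0) / 2) ^ 2) *
        (-2 * Real.sinh (w (x, 0)) * Real.sin (θ (x, 0)) / 2)
        = -2 * Real.sin (θ (x, 0)) * g x := by
      have hs : Real.sinh (w (x, 0)) = 2 * Real.sinh (w (x, 0) / 2) * Real.cosh (w (x, 0) / 2) := by
        rw [← Real.sinh_two_mul]; ring_nf
      rw [hs, hg]
      have hcpos := Real.cosh_pos (w (x, 0) / 2)
      simp only []
      rw [Real.tanh_eq_sinh_div_cosh]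
      field_simp
    rw [key] at h2
    exact h2
  set h : ℝ → ℝ := fun x => g x * Real.exp (2 * I x) with hh
  have hhderiv : ∀ x : ℝ, HasDerivAt h 0 x := by
    intro x
    have hE : HasDerivAt (fun x => Real.exp (2 * I x))
        (Real.exp (2 * I x) * (2 * Real.sin (θ (x, 0)))) x :=
      (((hIderiv x).const_mul 2).exp)
    have := (hgderiv x).mul hE
    refine this.congr_deriv ?_
    ring
  have hconst : ∀ x : ℝ, h x = h 0 := by
    intro x
    exact is_const_of_deriv_eq_zero (fun y => (hhderiv y).differentiableAt)
      (fun y => (hhderiv y).deriv) x 0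
  intro x
  have h0 : h 0 = g 0 := by
    simp [hh, hI, hg]
  have hx := hconst x
  rw [h0] at hx
  -- hx : g x * exp (2 * I x) = g 0
  have hexp : Real.exp (-2 * I x) = (Real.exp (2 * I x))⁻¹ := by
    rw [← Real.exp_neg]; ring_nf
  show g x = g 0 * Real.exp (-2 * I x)
  rw [hexp, ← hx]
  field_simp
  rfl
end

section
/- Let U = {(x,y) ∈ ℝ² : sinh(2x)·sinh(2y) < 1}, let w : U → ℝ be defined by w(x,y) = arcsinh( (sinh(2x) + sinh(2y)) / (1 − sinh(2x)·sinh(2y)) ), and let u : ℝ² → ℂ be u = R + iS with R(x,y) = sech(2y) − sinh(2x)·tanh(2y) and S(x,y) = sinh(2x)·sech(2y) + tanh(2y) − 2y. Then on U one has ∂u/∂z̄ = e^{−2w} · ∂u/∂z, where ∂/∂z = (1/2)(∂/∂x − i ∂/∂y) and ∂/∂z̄ = (1/2)(∂/∂x + i ∂/∂y). -/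
/-- First partial derivative (in the x-direction) of a ℂ-valued function on ℝ². -/
noncomputable def cpdx (f : ℝ × ℝ → ℂ) (p : ℝ × ℝ) : ℂ := fderiv ℝ f p (1, 0)

/-- Second partial derivative (in the y-direction) of a ℂ-valued function on ℝ². -/
noncomputable def cpdy (f : ℝ × ℝ → ℂ) (p : ℝ × ℝ) : ℂ := fderiv ℝ f p (0, 1)

/-- Wirtinger derivative ∂/∂z = (1/2)(∂/∂x − i ∂/∂y). -/
noncomputable def dz (f : ℝ × ℝ → ℂ) (p : ℝ × ℝ) : ℂ :=
  (1 / 2 : ℂ) * (cpdx f p - Complex.I * cpdy f p)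

/-- Wirtinger derivative ∂/∂z̄ = (1/2)(∂/∂x + i ∂/∂y). -/
noncomputable def dzbar (f : ℝ × ℝ → ℂ) (p : ℝ × ℝ) : ℂ :=
  (1 / 2 : ℂ) * (cpdx f p + Complex.I * cpdy f p)

set_option maxHeartbeats 1000000 in
theorem stmt_13 (U : Set (ℝ × ℝ))
    (hU : U = {p : ℝ × ℝ | Real.sinh (2 * p.1) * Real.sinh (2 * p.2) < 1})
    (w : ℝ × ℝ → ℝ)
    (hw : ∀ p : ℝ × ℝ, w p = Real.arsinh ((Real.sinh (2 * p.1) + Real.sinh (2 * p.2)) /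
      (1 - Real.sinh (2 * p.1) * Real.sinh (2 * p.2))))
    (R S : ℝ × ℝ → ℝ)
    (hR : ∀ p : ℝ × ℝ, R p = 1 / Real.cosh (2 * p.2) -
      Real.sinh (2 * p.1) * Real.tanh (2 * p.2))
    (hS : ∀ p : ℝ × ℝ, S p = Real.sinh (2 * p.1) / Real.cosh (2 * p.2) +
      Real.tanh (2 * p.2) - 2 * p.2)
    (u : ℝ × ℝ → ℂ)
    (hu : ∀ p : ℝ × ℝ, u p = (R p : ℂ) + Complex.I * (S p : ℂ)) :
    ∀ p ∈ U, dzbar u p = (Real.exp (-2 * w p) : ℂ) * dz u p := by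
  have hu' : u = fun q : ℝ × ℝ =>
      (((Real.cosh (2*q.2))⁻¹ - Real.sinh (2*q.1) * Real.sinh (2*q.2) * (Real.cosh (2*q.2))⁻¹ : ℝ) : ℂ)
      + Complex.I * ((Real.sinh (2*q.1) * (Real.cosh (2*q.2))⁻¹
          + Real.sinh (2*q.2) * (Real.cosh (2*q.2))⁻¹ - 2*q.2 : ℝ) : ℂ) := by
    funext q
    rw [hu, hR, hS, Real.tanh_eq_sinh_div_cosh]
    push_cast
    ring
  rintro ⟨x, y⟩ hp
  rw [hU] at hp
  simp only [Set.mem_setOf_eq] at hp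
  -- derivatives
  have h2x : HasFDerivAt (fun q : ℝ × ℝ => 2 * q.1) ((2:ℝ) • ContinuousLinearMap.fst ℝ ℝ ℝ) (x, y) :=
    (hasFDerivAt_fst).const_mul 2
  have h2y : HasFDerivAt (fun q : ℝ × ℝ => 2 * q.2) ((2:ℝ) • ContinuousLinearMap.snd ℝ ℝ ℝ) (x, y) :=
    (hasFDerivAt_snd).const_mul 2
  have ha := h2x.sinh
  have hb := h2y.sinh
  have hc := h2y.cosh
  have hBne : Real.cosh (2*y) ≠ 0 := (Real.cosh_pos _).ne'
  have hinv := (hasDerivAt_inv hBne).comp_hasFDerivAt (x,y) hc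
  have hF := hinv.sub ((ha.mul hb).mul hinv)
  have hG := ((ha.mul hinv).add (hb.mul hinv)).sub h2y
  have hFc := Complex.ofRealCLM.hasFDerivAt.comp (x,y) hF
  have hGc := (Complex.ofRealCLM.hasFDerivAt.comp (x,y) hG).const_mul Complex.I
  have htot := hFc.add hGc
  set a := Real.sinh (2*x) with ha_def
  set b := Real.sinh (2*y) with hb_def
  set A := Real.cosh (2*x) with hA_def
  set B := Real.cosh (2*y) with hB_def
  clear hu hR hS
  have Hu : HasFDerivAt u
      (Complex.ofRealCLM.comp
        (-(B ^ 2)⁻¹ • b • (2:ℝ) • ContinuousLinearMap.snd ℝ ℝ ℝ -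
          ((a * b) • -(B ^ 2)⁻¹ • b • (2:ℝ) • ContinuousLinearMap.snd ℝ ℝ ℝ +
            B⁻¹ • (a • B • (2:ℝ) • ContinuousLinearMap.snd ℝ ℝ ℝ +
              b • A • (2:ℝ) • ContinuousLinearMap.fst ℝ ℝ ℝ))) +
      Complex.I •
        Complex.ofRealCLM.comp
          (a • -(B ^ 2)⁻¹ • b • (2:ℝ) • ContinuousLinearMap.snd ℝ ℝ ℝ +
              B⁻¹ • A • (2:ℝ) • ContinuousLinearMap.fst ℝ ℝ ℝ +
              (b • -(B ^ 2)⁻¹ • b • (2:ℝ) • ContinuousLinearMap.snd ℝ ℝ ℝ +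
                B⁻¹ • B • (2:ℝ) • ContinuousLinearMap.snd ℝ ℝ ℝ) -
            (2:ℝ) • ContinuousLinearMap.snd ℝ ℝ ℝ)) (x,y) := by
    rw [hu']; exact htot
  clear htot hFc hGc hF hG hinv ha hb hc h2x h2y hu'
  have hBpos : (0:ℝ) < B := Real.cosh_pos _
  have hApos : (0:ℝ) < A := Real.cosh_pos _
  have hA2 : A^2 = 1 + a^2 := Real.cosh_sq' _
  have hB2 : B^2 = 1 + b^2 := Real.cosh_sq' _
  have hdx : cpdx u (x,y) = ((-2*A*b*B⁻¹ : ℝ) : ℂ) + Complex.I * ((2*A*B⁻¹ : ℝ) : ℂ) := by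
    rw [cpdx, Hu.fderiv]
    simp only [ContinuousLinearMap.add_apply, ContinuousLinearMap.sub_apply,
      ContinuousLinearMap.smul_apply, ContinuousLinearMap.comp_apply,
      ContinuousLinearMap.coe_fst', ContinuousLinearMap.coe_snd',
      Complex.ofRealCLM_apply, smul_eq_mul]
    push_cast
    ring
  have hdy : cpdy u (x,y) = ((-2*(a+b)*(B^2)⁻¹ : ℝ) : ℂ)
      + Complex.I * ((-2*b*(a+b)*(B^2)⁻¹ : ℝ) : ℂ) := by
    rw [cpdy, Hu.fderiv]
    simp only [ContinuousLinearMap.add_apply, ContinuousLinearMap.sub_apply,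
      ContinuousLinearMap.smul_apply, ContinuousLinearMap.comp_apply,
      ContinuousLinearMap.coe_fst', ContinuousLinearMap.coe_snd',
      Complex.ofRealCLM_apply, smul_eq_mul]
    rw [Complex.ext_iff]
    simp only [Complex.add_re, Complex.add_im, Complex.mul_re, Complex.mul_im,
      Complex.I_re, Complex.I_im, Complex.ofReal_re, Complex.ofReal_im]
    norm_num
    constructor
    · field_simp
      linear_combination (-a) * hB2
    · field_simp
      ring_nf
  -- the exponential factor
  clear Hu
  have hkey : (A*B)^2 = (a+b)^2 + (1-a*b)^2 := by
    linear_combination B^2 * hA2 + (1 + a^2) * hB2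
  have h1ab : (0:ℝ) < 1 - a*b := by linarith
  have hABpos : (0:ℝ) < A*B + (a+b) := by
    nlinarith [mul_pos hApos hBpos, sq_nonneg (1 - a*b)]
  have hwval : Real.exp (w (x,y)) = (A*B + (a+b)) / (1 - a*b) := by
    rw [hw]
    simp only [← ha_def, ← hb_def]
    rw [Real.exp_arsinh]
    have hsq : 1 + ((a+b)/(1-a*b))^2 = (A*B/(1-a*b))^2 := by
      field_simp
      linear_combination (-1)*hkey
    rw [hsq, Real.sqrt_sq (by positivity)]
    field_simp
    ring
  have hEval : Real.exp (-2 * w (x,y)) = ((1-a*b)/(A*B + (a+b)))^2 := by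
    rw [show -2 * w (x,y) = -(w (x,y)) + -(w (x,y)) by ring, Real.exp_add, Real.exp_neg, hwval, inv_div]
    ring
  have hE : Real.exp (-2 * w (x,y)) * (A*B + (a+b)) = A*B - (a+b) := by
    rw [hEval]
    have h2 : (1-a*b)^2 = (A*B + (a+b)) * (A*B - (a+b)) := by linear_combination (-1)*hkey
    have hne : A*B + (a+b) ≠ 0 := ne_of_gt hABpos
    rw [div_pow, div_mul_eq_mul_div, div_eq_iff (pow_ne_zero 2 hne)]
    linear_combination (A*B+(a+b)) * h2
  -- final step
  set E := Real.exp (-2 * w (x,y)) with hE_def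
  rw [dzbar, dz, hdx, hdy, Complex.ext_iff]
  simp only [Complex.add_re, Complex.add_im, Complex.sub_re, Complex.sub_im,
    Complex.mul_re, Complex.mul_im, Complex.I_re, Complex.I_im,
    Complex.ofReal_re, Complex.ofReal_im, Complex.div_re, Complex.div_im,
    Complex.one_re, Complex.one_im]
  norm_num
  constructor
  · field_simp
    linear_combination b * hE
  · field_simp
    linear_combination (-1) * hE
end

section
/- The function θ(x,y) = 2 arctan(2y·sec(2x)), defined on the open set {(x,y) ∈ ℝ² : cos(2x) ≠ 0}, satisfies the elliptic sine-Gordon equation Δθ = −2 sin(2θ) there. -/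
noncomputable def Dd (q : ℝ × ℝ) : ℝ :=
  Real.cos (2*q.1) * Real.cos (2*q.1) + 4 * (q.2 * q.2)

lemma Dd_pos (q : ℝ × ℝ) (h : Real.cos (2*q.1) ≠ 0) : 0 < Dd q := by
  have := mul_self_nonneg q.2
  have := mul_self_pos.2 h
  unfold Dd; nlinarith

noncomputable def F1 (q : ℝ × ℝ) : ℝ := 8 * q.2 * Real.sin (2*q.1) * (Dd q)⁻¹
noncomputable def F2 (q : ℝ × ℝ) : ℝ := 4 * Real.cos (2*q.1) * (Dd q)⁻¹

lemma hcos' (q : ℝ × ℝ) : HasFDerivAt (fun p : ℝ × ℝ => Real.cos (2*p.1))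
    ((-Real.sin (2*q.1)) • ((2:ℝ) • ContinuousLinearMap.fst ℝ ℝ ℝ)) q :=
  by have h := (Real.hasDerivAt_cos (2*q.1)).comp_hasFDerivAt q ((hasFDerivAt_fst (𝕜 := ℝ) (p := q)).const_mul 2); exact h

lemma hsin' (q : ℝ × ℝ) : HasFDerivAt (fun p : ℝ × ℝ => Real.sin (2*p.1))
    ((Real.cos (2*q.1)) • ((2:ℝ) • ContinuousLinearMap.fst ℝ ℝ ℝ)) q :=
  by have h := (Real.hasDerivAt_sin (2*q.1)).comp_hasFDerivAt q ((hasFDerivAt_fst (𝕜 := ℝ) (p := q)).const_mul 2); exact h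

lemma hDd (q : ℝ × ℝ) : HasFDerivAt Dd
    ((Real.cos (2*q.1) • ((-Real.sin (2*q.1)) • ((2:ℝ) • ContinuousLinearMap.fst ℝ ℝ ℝ)) +
      Real.cos (2*q.1) • ((-Real.sin (2*q.1)) • ((2:ℝ) • ContinuousLinearMap.fst ℝ ℝ ℝ))) +
     (4:ℝ) • (q.2 • ContinuousLinearMap.snd ℝ ℝ ℝ + q.2 • ContinuousLinearMap.snd ℝ ℝ ℝ)) q := by
  exact ((hcos' q).mul (hcos' q)).add ((hasFDerivAt_snd.mul hasFDerivAt_snd).const_mul 4)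

lemma hDdinv (q : ℝ × ℝ) (h : Real.cos (2*q.1) ≠ 0) :
    HasFDerivAt (fun p => (Dd p)⁻¹)
      ((-(Dd q ^ 2)⁻¹) • ((Real.cos (2*q.1) • ((-Real.sin (2*q.1)) • ((2:ℝ) • ContinuousLinearMap.fst ℝ ℝ ℝ)) +
      Real.cos (2*q.1) • ((-Real.sin (2*q.1)) • ((2:ℝ) • ContinuousLinearMap.fst ℝ ℝ ℝ))) +
     (4:ℝ) • (q.2 • ContinuousLinearMap.snd ℝ ℝ ℝ + q.2 • ContinuousLinearMap.snd ℝ ℝ ℝ))) q :=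
  (hasDerivAt_inv (Dd_pos q h).ne').comp_hasFDerivAt q (hDd q)

lemma Lapp (a b : ℝ) (v : ℝ × ℝ) :
    (a • ContinuousLinearMap.fst ℝ ℝ ℝ + b • ContinuousLinearMap.snd ℝ ℝ ℝ) v = a * v.1 + b * v.2 := by
  simp

lemma theta_deriv (θ : ℝ × ℝ → ℝ)
    (hθ : ∀ p : ℝ × ℝ, θ p = 2 * Real.arctan (2 * p.2 / Real.cos (2 * p.1)))
    (q : ℝ × ℝ) (hq : Real.cos (2 * q.1) ≠ 0) :
    HasFDerivAt θ (F1 q • ContinuousLinearMap.fst ℝ ℝ ℝ + F2 q • ContinuousLinearMap.snd ℝ ℝ ℝ) q := by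
  have hθf : θ = fun p : ℝ × ℝ => 2 * Real.arctan (2 * p.2 * (Real.cos (2 * p.1))⁻¹) := by
    funext p; rw [hθ, div_eq_mul_inv]
  have hcinv : HasFDerivAt (fun p : ℝ × ℝ => (Real.cos (2*p.1))⁻¹)
      ((-(Real.cos (2*q.1) ^ 2)⁻¹) • ((-Real.sin (2*q.1)) • ((2:ℝ) • ContinuousLinearMap.fst ℝ ℝ ℝ))) q :=
    (hasDerivAt_inv hq).comp_hasFDerivAt q (hcos' q)
  have h2y : HasFDerivAt (fun p : ℝ × ℝ => 2 * p.2) ((2:ℝ) • ContinuousLinearMap.snd ℝ ℝ ℝ) q :=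
    hasFDerivAt_snd.const_mul 2
  have hu := h2y.mul hcinv
  have harc := ((Real.hasDerivAt_arctan (2*q.2 * (Real.cos (2*q.1))⁻¹)).comp_hasFDerivAt q hu).const_mul 2
  rw [hθf]
  refine harc.congr_fderiv ?_
  refine ContinuousLinearMap.ext fun v => ?_
  have hD := (Dd_pos q hq).ne'
  simp only [ContinuousLinearMap.add_apply, ContinuousLinearMap.smul_apply,
    ContinuousLinearMap.coe_fst', ContinuousLinearMap.coe_snd', smul_eq_mul, F1, F2]
  have h1 : (1 + (2 * q.2 * (Real.cos (2 * q.1))⁻¹) ^ 2) = Dd q / Real.cos (2*q.1)^2 := by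
    unfold Dd; field_simp; ring
  rw [h1]
  field_simp
  ring

lemma pdx_F1 (p : ℝ × ℝ) (hp : Real.cos (2 * p.1) ≠ 0) :
    fderiv ℝ F1 p (1, 0) =
      16 * p.2 * Real.cos (2*p.1) * (4 * p.2^2 - Real.cos (2*p.1)^2 + 2) * ((Dd p)^2)⁻¹ := by
  have h : HasFDerivAt F1 _ p :=
    ((hasFDerivAt_snd.const_mul (8:ℝ)).mul (hsin' p)).mul (hDdinv p hp)
  rw [h.fderiv]
  have hD := (Dd_pos p hp).ne'
  have hs : Real.sin (2*p.1)^2 = 1 - Real.cos (2*p.1)^2 := by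
    have := Real.sin_sq_add_cos_sq (2*p.1); linarith
  simp only [ContinuousLinearMap.add_apply, ContinuousLinearMap.smul_apply,
    ContinuousLinearMap.coe_fst', ContinuousLinearMap.coe_snd', smul_eq_mul, Pi.mul_apply]
  have hDd2 : Dd p = Real.cos (2*p.1)^2 + 4*p.2^2 := by unfold Dd; ring
  field_simp
  ring_nf
  ring_nf at hs hDd2
  linear_combination (32*p.2*Real.cos (p.1*2)) * hs + (16*p.2*Real.cos (p.1*2)) * hDd2

lemma pdy_F2 (p : ℝ × ℝ) (hp : Real.cos (2 * p.1) ≠ 0) :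
    fderiv ℝ F2 p (0, 1) = -32 * p.2 * Real.cos (2*p.1) * ((Dd p)^2)⁻¹ := by
  have h : HasFDerivAt F2 _ p := ((hcos' p).const_mul (4:ℝ)).mul (hDdinv p hp)
  rw [h.fderiv]
  have hD := (Dd_pos p hp).ne'
  simp only [ContinuousLinearMap.add_apply, ContinuousLinearMap.smul_apply,
    ContinuousLinearMap.coe_fst', ContinuousLinearMap.coe_snd', smul_eq_mul]
  field_simp
  ring

lemma sin_four_arctan (u : ℝ) :
    Real.sin (2 * (2 * Real.arctan u)) = 4 * u * (1 - u^2) / (1 + u^2)^2 := by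
  have h1 : (0:ℝ) < 1 + u^2 := by positivity
  rw [Real.sin_two_mul, Real.sin_two_mul, Real.cos_two_mul, Real.sin_arctan, Real.cos_arctan]
  have hS2 : Real.sqrt (1+u^2)^2 = 1+u^2 := Real.sq_sqrt h1.le
  have hSne : Real.sqrt (1+u^2) ≠ 0 := by positivity
  field_simp
  ring_nf
  have hS4 : Real.sqrt (1+u^2)^4 = (1+u^2)^2 := by rw [show (4:ℕ) = 2*2 from rfl, pow_mul, hS2]
  rw [hS4, hS2]
  ring

theorem stmt_15 (θ : ℝ × ℝ → ℝ)
    (hθ : ∀ p : ℝ × ℝ, θ p = 2 * Real.arctan (2 * p.2 / Real.cos (2 * p.1))) :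
    ∀ p : ℝ × ℝ, Real.cos (2 * p.1) ≠ 0 → lap θ p = -2 * Real.sin (2 * θ p) := by
  intro p hp
  have hc : Continuous fun q : ℝ × ℝ => Real.cos (2 * q.1) := by continuity
  have hS : IsOpen {q : ℝ × ℝ | Real.cos (2 * q.1) ≠ 0} := isOpen_ne.preimage hc
  have hmem : {q : ℝ × ℝ | Real.cos (2 * q.1) ≠ 0} ∈ nhds p := hS.mem_nhds hp
  have hx : pdx θ =ᶠ[nhds p] F1 := by
    filter_upwards [hmem] with q hq
    unfold pdx
    rw [(theta_deriv θ hθ q hq).fderiv]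
    simp
  have hy : pdy θ =ᶠ[nhds p] F2 := by
    filter_upwards [hmem] with q hq
    unfold pdy
    rw [(theta_deriv θ hθ q hq).fderiv]
    simp
  have h1 : pdx (pdx θ) p = fderiv ℝ F1 p (1, 0) := by
    rw [show pdx (pdx θ) p = fderiv ℝ (pdx θ) p (1, 0) from rfl, hx.fderiv_eq]
  have h2 : pdy (pdy θ) p = fderiv ℝ F2 p (0, 1) := by
    rw [show pdy (pdy θ) p = fderiv ℝ (pdy θ) p (0, 1) from rfl, hy.fderiv_eq]
  rw [lap, h1, h2, pdx_F1 p hp, pdy_F2 p hp, hθ p,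
    show (2 : ℝ) * (2 * Real.arctan (2 * p.2 / Real.cos (2 * p.1)))
      = 2 * (2 * Real.arctan (2 * p.2 / Real.cos (2 * p.1))) from rfl,
    sin_four_arctan]
  have hD := (Dd_pos p hp).ne'
  have hDd2 : Dd p = Real.cos (2 * p.1) ^ 2 + 4 * p.2 ^ 2 := by unfold Dd; ring
  have hne : (1 : ℝ) + (2 * p.2 / Real.cos (2 * p.1))^2 ≠ 0 := by positivity
  rw [hDd2]
  rw [hDd2] at hD
  field_simp
  ring
end
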